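/- Let (R, m) be a Noetherian local ring which is not a field, and let I be a proper ideal of R with m² ⊆ I such that the Artinian local ring R/I is Gorenstein (equivalently, since m² ⊆ I ⊊ R, the socle (I :_R m)/I is a one-dimensional R/m-vector space). If I is not weakly m-full, i.e. (mI :_R m) ≠ I, then m² = Im and μ_R(m) = 1 + μ_R(I), where μ_R denotes the minimal number of generators. -/

import Mathlib

/-- The length of an `R`-module `M`: the supremum of lengths of strictly
increasing chains of submodules of `M`, valued in `ℕ∞`. -/
noncomputable def modLength (R M : Type*) [CommRing R] [AddCommGroup M] [Module R M] : ℕ∞ :=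
  ⨆ s : RelSeries {(a, b) : Submodule R M × Submodule R M | a < b}, (s.length : ℕ∞)

/-- The minimal number of generators of an ideal. -/
noncomputable def mu {R : Type*} [CommRing R] (I : Ideal R) : ℕ :=
  sInf {n : ℕ | ∃ s : Finset R, s.card = n ∧ Ideal.span (s : Set R) = I}

lemma mu_le {R : Type*} [CommRing R] {I : Ideal R} {s : Finset R}
    (h : Ideal.span (s : Set R) = I) : mu I ≤ s.card :=
  Nat.sInf_le ⟨s, rfl, h⟩

lemma mu_spec {R : Type*} [CommRing R] {I : Ideal R} (h : I.FG) :
    ∃ s : Finset R, s.card = mu I ∧ Ideal.span (s : Set R) = I := by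
  obtain ⟨s, hs⟩ := h
  have h2 : mu I ∈ {n : ℕ | ∃ s : Finset R, s.card = n ∧ Ideal.span (s : Set R) = I} :=
    Nat.sInf_mem ⟨s.card, s, rfl, hs⟩
  exact h2

lemma unit_mul_mem {R : Type*} [CommRing R] {I : Ideal R} {b x : R}
    (hb : IsUnit b) (h : b * x ∈ I) : x ∈ I := by
  obtain ⟨u, rfl⟩ := hb
  have := I.mul_mem_left (↑u⁻¹ : R) h
  rwa [← mul_assoc, Units.inv_mul, one_mul] at this

lemma modLength_one_simple {R M : Type*} [CommRing R] [AddCommGroup M] [Module R M]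
    (h : modLength R M = 1) :
    (⊥ : Submodule R M) ≠ ⊤ ∧ ∀ N : Submodule R M, N = ⊥ ∨ N = ⊤ := by
  have hub : ∀ s : RelSeries {(a, b) : Submodule R M × Submodule R M | a < b},
      (s.length : ℕ∞) ≤ 1 := fun s =>
    h ▸ le_iSup (fun s : RelSeries {(a, b) : Submodule R M × Submodule R M | a < b} =>
      (s.length : ℕ∞)) s
  constructor
  · intro hbt
    have hall : ∀ N : Submodule R M, N = ⊥ := fun N => le_antisymm (hbt ▸ le_top) bot_le
    have h0 : ∀ s : RelSeries {(a, b) : Submodule R M × Submodule R M | a < b},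
        s.length = 0 := by
      intro s
      by_contra hlen
      have hstep := s.step ⟨0, Nat.pos_of_ne_zero hlen⟩
      rw [hall (s.toFun _), hall (s.toFun _)] at hstep
      exact lt_irrefl (⊥ : Submodule R M) hstep
    have : modLength R M ≤ 0 := iSup_le fun s => by simp [h0 s]
    rw [h] at this
    exact absurd this (by norm_num)
  · intro N
    by_contra hN
    push_neg at hN
    obtain ⟨h1, h2⟩ := hN
    have hb : (⊥ : Submodule R M) < N := bot_lt_iff_ne_bot.mpr h1
    have ht : N < ⊤ := lt_top_iff_ne_top.mpr h2
    have := hub ((((RelSeries.singleton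
        {(a, b) : Submodule R M × Submodule R M | a < b} ⊤).cons N ht).cons ⊥
        (show (⊥ : Submodule R M) < N from hb)))
    change ((2 : ℕ) : ℕ∞) ≤ 1 at this
    norm_num at this

/-- Let `(R, m)` be a Noetherian local ring which is not a field, and `I`
a proper ideal with `m² ⊆ I` such that `R/I` is Gorenstein (equivalently, the socle
`(I :_R m)/I` is a one-dimensional `R/m`-vector space, i.e. has length one).  If `I` is not
weakly `m`-full, i.e. `(mI :_R m) ≠ I`, then `m² = Im` and `μ_R(m) = 1 + μ_R(I)`. -/
theorem stmt16 (R : Type*) [CommRing R] [IsNoetherianRing R] [IsLocalRing R]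
    (hnf : ¬ IsField R)
    (I : Ideal R) (hI : I ≠ ⊤)
    (hm2 : (IsLocalRing.maximalIdeal R) ^ 2 ≤ I)
    -- `R/I` is Gorenstein: the socle `(I :_R m)/I` has length one:
    (hGor : modLength R
      (↥(I.colon (IsLocalRing.maximalIdeal R)) ⧸
        Submodule.comap (I.colon (IsLocalRing.maximalIdeal R)).subtype I) = 1)
    -- `I` is not weakly `m`-full:
    (hwm : (IsLocalRing.maximalIdeal R * I).colon (IsLocalRing.maximalIdeal R) ≠ I) :
    (IsLocalRing.maximalIdeal R) ^ 2 = I * IsLocalRing.maximalIdeal R ∧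
    mu (IsLocalRing.maximalIdeal R) = 1 + mu I := by
  classical
  set m := IsLocalRing.maximalIdeal R with hm
  set S := I.colon m with hSdef
  set K := (m * I).colon m with hKdef
  have mem_colon' : ∀ {J L : Ideal R} {x : R}, x ∈ J.colon L ↔ ∀ p ∈ L, x * p ∈ J := by
    intro J L x
    rw [Submodule.mem_colon]
    exact Iff.rfl
  have hIm : I ≤ m := IsLocalRing.le_maximalIdeal hI
  have hmm : m * m ≤ I := by rw [← pow_two]; exact hm2
  have hmS : m ≤ S := fun x hx =>
    mem_colon'.mpr fun p hp => hmm (Ideal.mul_mem_mul hx hp)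
  have hIS : I ≤ S := fun x hx =>
    mem_colon'.mpr fun p hp => I.mul_mem_right p hx
  have hIK : I ≤ K := fun x hx =>
    mem_colon'.mpr fun p hp => by
      rw [mul_comm x p]; exact Ideal.mul_mem_mul hp hx
  have hKS : K ≤ S := fun x hx =>
    mem_colon'.mpr fun p hp => Ideal.mul_le_right (I := m) (J := I) (mem_colon'.mp hx p hp)
  -- simpleness of the socle
  obtain ⟨hne, hsimple⟩ := modLength_one_simple hGor
  have key : ∀ J : Ideal R, I ≤ J → J ≤ S → J = I ∨ J = S := by
    intro J hIJ hJS
    set p : Submodule R ↥S := Submodule.comap S.subtype I with hp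
    set q : Submodule R ↥S := Submodule.comap S.subtype J with hq
    rcases hsimple (q.map p.mkQ) with hb | htp
    · left
      refine le_antisymm (fun x hx => ?_) hIJ
      have h1 : (⟨x, hJS hx⟩ : ↥S) ∈ q := hx
      have h2 : p.mkQ ⟨x, hJS hx⟩ ∈ q.map p.mkQ := Submodule.mem_map_of_mem h1
      rw [hb, Submodule.mem_bot, Submodule.mkQ_apply,
        Submodule.Quotient.mk_eq_zero] at h2
      exact h2
    · right
      refine le_antisymm hJS fun x hxS => ?_
      have htop : p ⊔ q = ⊤ := by rwa [Submodule.map_mkQ_eq_top] at htp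
      have hpq : p ≤ q := fun y hy => hIJ hy
      rw [sup_eq_right.mpr hpq] at htop
      have : (⟨x, hxS⟩ : ↥S) ∈ q := htop ▸ Submodule.mem_top
      exact this
  have hKI : K ≠ I := hwm
  have hKeqS : K = S := (key K hIK hKS).resolve_left hKI
  have hmfg : m.FG := IsNoetherian.noetherian m
  have hIfg : I.FG := IsNoetherian.noetherian I
  have hjac : m ≤ Ideal.jacobson ⊥ :=
    le_of_eq (IsLocalRing.jacobson_eq_maximalIdeal ⊥ bot_ne_top).symm
  -- m ≠ I
  have hmI : m ≠ I := by
    intro hEq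
    have hStop : S = ⊤ := by
      rw [eq_top_iff]
      intro x _
      exact mem_colon'.mpr fun p hp => Ideal.mul_mem_left I x (hEq ▸ hp)
    have h1K : (1 : R) ∈ K := by rw [hKeqS, hStop]; trivial
    have hmle : m ≤ m * I := fun p hp => by
      have := mem_colon'.mp h1K p hp
      rwa [one_mul] at this
    have : m ≤ ⊥ := by
      refine Submodule.le_of_le_smul_of_le_jacobson_bot hmfg hjac ?_
      rw [Ideal.smul_eq_mul, bot_sup_eq]
      rw [← hEq] at hmle
      rwa [mul_comm] at hmle
    exact hnf (IsLocalRing.isField_iff_maximalIdeal_eq.mpr (le_antisymm this bot_le))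
  have hmSEq : m = S := (key m hIm hmS).resolve_left hmI
  -- first conjunct
  have hmK : m ≤ K := by rw [hKeqS, ← hmSEq]
  have hmm2 : m * m ≤ m * I :=
    Ideal.mul_le.mpr fun r hr s hs => mem_colon'.mp (hmK hr) s hs
  have conj1 : m ^ 2 = I * m := by
    refine le_antisymm ?_ (Ideal.mul_le.mpr fun r hr s hs => ?_)
    · rw [pow_two, mul_comm I m]; exact hmm2
    · rw [pow_two]; exact Ideal.mul_mem_mul (hIm hr) hs
  refine ⟨conj1, ?_⟩
  -- pick x ∈ m \ I
  obtain ⟨x, hxm, hxI⟩ : ∃ x, x ∈ m ∧ x ∉ I := by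
    by_contra hcon
    push_neg at hcon
    exact hmI (le_antisymm hcon hIm)
  -- m = I ⊔ span {x}
  have hsup : I ⊔ Ideal.span {x} = m := by
    have h2 : I ⊔ Ideal.span {x} ≤ S :=
      (sup_le hIm ((Ideal.span_singleton_le_iff_mem m).mpr hxm)).trans hmS
    rcases key _ le_sup_left h2 with hEq | hEq
    · exfalso
      have hx' : x ∈ I ⊔ Ideal.span {x} :=
        Submodule.mem_sup_right (Ideal.mem_span_singleton_self x)
      rw [hEq] at hx'
      exact hxI hx'
    · rw [hEq, ← hmSEq]
  obtain ⟨s, hscard, hsspan⟩ := mu_spec hIfg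
  -- mu m ≤ 1 + mu I
  have hle : mu m ≤ 1 + mu I := by
    have hspan : Ideal.span (↑(insert x s) : Set R) = m := by
      rw [Finset.coe_insert, Ideal.span_insert, hsspan, sup_comm, hsup]
    calc mu m ≤ (insert x s).card := mu_le hspan
      _ ≤ s.card + 1 := Finset.card_insert_le _ _
      _ = 1 + mu I := by omega
  -- now the reverse inequality
  obtain ⟨t, htcard, htspan⟩ := mu_spec hmfg
  have htm : ∀ y ∈ t, y ∈ m := fun y hy => htspan ▸ Ideal.subset_span hy
  have hdec : ∀ y : R, ∃ p q : R, y ∈ m → p ∈ I ∧ y = p + q * x := by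
    intro y
    by_cases hy : y ∈ m
    · rw [← hsup] at hy
      obtain ⟨a, haI, b, hb, hab⟩ := Submodule.mem_sup.mp hy
      obtain ⟨cc, hcc⟩ := Ideal.mem_span_singleton'.mp hb
      exact ⟨a, cc, fun _ => ⟨haI, by rw [← hab, ← hcc]⟩⟩
    · exact ⟨0, 0, fun h => absurd h hy⟩
  choose a c hac using hdec
  have hxspan : x ∈ Ideal.span (↑t : Set R) := htspan.symm ▸ hxm
  obtain ⟨f, -, hf⟩ := Submodule.mem_span_finset.mp hxspan
  have hxeq : x = (∑ y ∈ t, f y * a y) + (∑ y ∈ t, f y * c y) * x := by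
    conv_lhs => rw [← hf]
    rw [Finset.sum_mul, ← Finset.sum_add_distrib]
    refine Finset.sum_congr rfl fun y hy => ?_
    rw [smul_eq_mul]
    linear_combination (f y) * (hac y (htm y hy)).2
  have hsumI : (1 - ∑ y ∈ t, f y * c y) * x ∈ I := by
    have heq : (1 - ∑ y ∈ t, f y * c y) * x = ∑ y ∈ t, f y * a y := by
      rw [sub_mul, one_mul]
      linear_combination hxeq
    rw [heq]
    exact Ideal.sum_mem I fun y hy => I.mul_mem_left _ (hac y (htm y hy)).1
  have hσ : (∑ y ∈ t, f y * c y) ∉ m := by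
    intro hσm
    have hu : IsUnit (1 - ∑ y ∈ t, f y * c y) :=
      IsLocalRing.isUnit_one_sub_self_of_mem_nonunits _
        ((IsLocalRing.mem_maximalIdeal _).mp hσm)
    exact hxI (unit_mul_mem hu hsumI)
  obtain ⟨y₀, hy₀t, hy₀⟩ : ∃ y₀ ∈ t, f y₀ * c y₀ ∉ m := by
    by_contra hcon
    push_neg at hcon
    exact hσ (Ideal.sum_mem m hcon)
  have hcy₀ : IsUnit (c y₀) := by
    by_contra hc
    exact hy₀ (Ideal.mul_mem_left m (f y₀)
      ((IsLocalRing.mem_maximalIdeal _).mpr hc))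
  obtain ⟨u, hu⟩ := hcy₀
  set e : R := (↑u⁻¹ : R) with he
  have heu : e * c y₀ = 1 := by rw [← hu]; exact u.inv_mul
  have hy₀m : y₀ ∈ m := htm y₀ hy₀t
  have hy₀dec := hac y₀ hy₀m
  set s' : Finset R := (t.erase y₀).image (fun y => y - (c y * e) * y₀) with hs'
  have hz : ∀ y ∈ t, y - (c y * e) * y₀ ∈ I := by
    intro y hy
    obtain ⟨haI, hyeq⟩ := hac y (htm y hy)
    have heq : y - (c y * e) * y₀ =
        (a y - (c y * e) * a y₀) + (c y - c y * (e * c y₀)) * x := by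
      linear_combination hyeq - (c y * e) * hy₀dec.2
    rw [heq, heu]
    simpa using sub_mem haI (I.mul_mem_left (c y * e) hy₀dec.1)
  have hZI : Ideal.span (↑s' : Set R) ≤ I := by
    rw [Ideal.span_le]
    intro z hz'
    simp only [hs', Finset.coe_image, Set.mem_image, Finset.mem_coe] at hz'
    obtain ⟨y, hy, rfl⟩ := hz'
    exact hz y (Finset.mem_of_mem_erase hy)
  have hkey : I ≤ Ideal.span (↑s' : Set R) ⊔ m • I := by
    intro w hw
    have hmle : m ≤ Ideal.span (↑s' : Set R) ⊔ Ideal.span {y₀} := by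
      rw [← htspan, Ideal.span_le]
      intro y hy
      by_cases hyy : y = y₀
      · subst hyy
        exact Submodule.mem_sup_right (Ideal.mem_span_singleton_self y)
      · have h1 : y - (c y * e) * y₀ ∈ Ideal.span (↑s' : Set R) :=
          Ideal.subset_span (by
            simp only [hs', Finset.coe_image, Set.mem_image, Finset.mem_coe]
            exact ⟨y, Finset.mem_erase.mpr ⟨hyy, hy⟩, rfl⟩)
        have h2 : (c y * e) * y₀ ∈ Ideal.span {y₀} :=
          Ideal.mem_span_singleton'.mpr ⟨_, rfl⟩
        have heq : y = (y - (c y * e) * y₀) + (c y * e) * y₀ := by ring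
        rw [heq]
        exact Submodule.add_mem _ (Submodule.mem_sup_left h1)
          (Submodule.mem_sup_right h2)
    obtain ⟨v, hv, b', hb', hvb⟩ := Submodule.mem_sup.mp (hmle (hIm hw))
    obtain ⟨b, rfl⟩ := Ideal.mem_span_singleton'.mp hb'
    have hbI : b * y₀ ∈ I := by
      have heq : b * y₀ = w - v := by rw [← hvb]; ring
      rw [heq]
      exact sub_mem hw (hZI hv)
    have hbx : b * x ∈ I := by
      have h1 : (b * c y₀) * x ∈ I := by
        have heq : (b * c y₀) * x = b * y₀ - b * a y₀ := by
          linear_combination (-b) * hy₀dec.2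
        rw [heq]
        exact sub_mem hbI (I.mul_mem_left b hy₀dec.1)
      have heq : b * x = e * ((b * c y₀) * x) := by
        calc b * x = (e * c y₀) * (b * x) := by rw [heu, one_mul]
          _ = e * ((b * c y₀) * x) := by ring
      rw [heq]
      exact I.mul_mem_left e h1
    have hbm : b ∈ m := by
      by_contra hbm'
      have hub : IsUnit b := by
        by_contra hub
        exact hbm' ((IsLocalRing.mem_maximalIdeal _).mpr hub)
      exact hxI (unit_mul_mem hub hbx)
    have hby₀ : b * y₀ ∈ m • I := by
      rw [Ideal.smul_eq_mul]
      exact hmm2 (Ideal.mul_mem_mul hbm hy₀m)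
    rw [← hvb]
    exact Submodule.add_mem _ (Submodule.mem_sup_left hv)
      (Submodule.mem_sup_right hby₀)
  have hIle : I ≤ Ideal.span (↑s' : Set R) :=
    Submodule.le_of_le_smul_of_le_jacobson_bot hIfg hjac hkey
  have hIspan : Ideal.span (↑s' : Set R) = I := le_antisymm hZI hIle
  have hcard : mu I ≤ t.card - 1 := by
    have h1 : s'.card ≤ (t.erase y₀).card := Finset.card_image_le
    have h2 : (t.erase y₀).card = t.card - 1 := Finset.card_erase_of_mem hy₀t
    have := mu_le hIspan
    omega
  have hmu1 : 1 ≤ mu m := by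
    by_contra hcon
    push_neg at hcon
    interval_cases h : mu m
    · have ht0 : t = ∅ := Finset.card_eq_zero.mp (by omega)
      rw [ht0] at htspan
      simp only [Finset.coe_empty, Ideal.span_empty] at htspan
      exact hnf (IsLocalRing.isField_iff_maximalIdeal_eq.mpr htspan.symm)
  omega
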